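/- Let F ∈ ℂ[x₀,…,xₙ] be homogeneous of degree d and let l₁,…,l_r ∈ ℂ[x₀,…,xₙ] be nonzero linear forms that are pairwise non-proportional, with l_i = a_{i0}x₀ + ⋯ + a_{in}xₙ. Let I_Γ ⊆ ℂ[y₀,…,yₙ] be the homogeneous ideal of all polynomials vanishing at every point (a_{i0},…,a_{in}) ∈ ℂ^{n+1} (equivalently, the homogeneous vanishing ideal of the points [l_i] in projective space). Then F is a ℂ-linear combination of l₁^d,…,l_r^d if and only if I_Γ ⊆ F^⊥. -/

import Mathlib

open MvPolynomial

noncomputable def diffOpMonomial {m : ℕ} (α : Fin m →₀ ℕ) :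
    MvPolynomial (Fin m) ℂ →ₗ[ℂ] MvPolynomial (Fin m) ℂ :=
  ((List.finRange m).map fun i =>
    ((pderiv (R := ℂ) i).toLinearMap) ^ (α i)).prod

noncomputable def diffAct {m : ℕ} :
    MvPolynomial (Fin m) ℂ →ₗ[ℂ] (MvPolynomial (Fin m) ℂ →ₗ[ℂ] MvPolynomial (Fin m) ℂ) :=
  (MvPolynomial.basisMonomials (Fin m) ℂ).constr ℂ diffOpMonomial

noncomputable def DiffSpan {m : ℕ} (f : MvPolynomial (Fin m) ℂ) :
    Submodule ℂ (MvPolynomial (Fin m) ℂ) :=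
  Submodule.span ℂ (Set.range fun α : Fin m →₀ ℕ => diffOpMonomial α f)

/-- The annihilator `f^⊥` of a polynomial `f`, as a `ℂ`-subspace of the ring of
differential operators (it is in fact an ideal). -/
noncomputable def perp {m : ℕ} (f : MvPolynomial (Fin m) ℂ) :
    Submodule ℂ (MvPolynomial (Fin m) ℂ) :=
  LinearMap.ker (diffAct.flip f)

/-- An ideal `I` is apolar to `F` if `I ⊆ F^⊥`, i.e. every `D ∈ I` annihilates `F`. -/
def IsApolarTo {m : ℕ} (I : Ideal (MvPolynomial (Fin m) ℂ))
    (F : MvPolynomial (Fin m) ℂ) : Prop :=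
  ∀ D ∈ I, diffAct D F = 0

/-- A homogeneous ideal is saturated (with respect to the irrelevant maximal ideal). -/
def IsSaturatedIdeal {m : ℕ} (I : Ideal (MvPolynomial (Fin m) ℂ)) : Prop :=
  ∀ g : MvPolynomial (Fin m) ℂ, (∀ i : Fin m, X i * g ∈ I) → g ∈ I

/-- The Hilbert function of `T/I` in degree `e`: `dim_ℂ (T/I)_e = dim T_e − dim I_e`. -/
noncomputable def hilb {m : ℕ} (I : Ideal (MvPolynomial (Fin m) ℂ)) (e : ℕ) : ℕ :=
  Module.finrank ℂ (homogeneousSubmodule (Fin m) ℂ e) -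
    Module.finrank ℂ
      (Submodule.restrictScalars ℂ I ⊓ homogeneousSubmodule (Fin m) ℂ e :
        Submodule ℂ (MvPolynomial (Fin m) ℂ))

/-- `I` defines a zero-dimensional subscheme of length `r`: it is homogeneous,
saturated, and `dim_ℂ (T/I)_e = r` for all sufficiently large `e`. -/
def DefinesLength {m : ℕ} (I : Ideal (MvPolynomial (Fin m) ℂ)) (r : ℕ) : Prop :=
  (∀ g ∈ I, ∀ j : ℕ, homogeneousComponent j g ∈ I) ∧
  IsSaturatedIdeal I ∧
  ∃ e₀ : ℕ, ∀ e ≥ e₀, hilb I e = r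

/-- The cactus rank of `F`: the minimal length of an apolar zero-dimensional subscheme. -/
noncomputable def cactusRank {m : ℕ} (F : MvPolynomial (Fin m) ℂ) : ℕ :=
  sInf {r : ℕ | ∃ I : Ideal (MvPolynomial (Fin m) ℂ), IsApolarTo I F ∧ DefinesLength I r}

/-- Dehomogenization with respect to `x₀`: `f = F(1, x₁, …, xₙ)`. -/
noncomputable def dehom {n : ℕ} (F : MvPolynomial (Fin (n + 1)) ℂ) :
    MvPolynomial (Fin n) ℂ :=
  aeval (fun i : Fin (n + 1) =>
    Fin.cases (motive := fun _ => MvPolynomial (Fin n) ℂ) 1 (fun j => X j) i) F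

/-- Homogenization with respect to a new variable `y₀`. -/
noncomputable def homogenize {n : ℕ} (g : MvPolynomial (Fin n) ℂ) :
    MvPolynomial (Fin (n + 1)) ℂ :=
  ∑ j ∈ Finset.range (g.totalDegree + 1),
    (X 0 : MvPolynomial (Fin (n + 1)) ℂ) ^ (g.totalDegree - j) *
      rename Fin.succ (homogeneousComponent j g)

/-- `N_d`: `2·C(n+k,k)` if `d = 2k+1`, and `C(n+k,k) + C(n+k+1,k+1)` if `d = 2k+2`. -/
def Nd (n d : ℕ) : ℕ :=
  if d % 2 = 1 then 2 * Nat.choose (n + d / 2) (d / 2)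
  else Nat.choose (n + d / 2 - 1) (d / 2 - 1) + Nat.choose (n + d / 2) (d / 2)

lemma descF_succ' (n k : ℕ) : n.descFactorial (k + 1) = n * (n - 1).descFactorial k := by
  cases n with
  | zero => simp
  | succ n => rw [Nat.succ_descFactorial_succ]; simp

lemma descF_add (a b n : ℕ) :
    n.descFactorial (a + b) = n.descFactorial b * (n - b).descFactorial a := by
  induction b generalizing n with
  | zero => simp
  | succ b ih =>
      rw [show a + (b + 1) = (a + b) + 1 by omega, descF_succ', ih (n - 1),
        descF_succ' n b, show n - 1 - b = n - (b + 1) by omega, mul_assoc]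

lemma pderiv_pow_monomial {m : ℕ} (i : Fin m) (k : ℕ) (β : Fin m →₀ ℕ) (c : ℂ) :
    (((pderiv (R := ℂ) i).toLinearMap) ^ k) (monomial β c) =
      monomial (β - Finsupp.single i k) (c * ((β i).descFactorial k : ℂ)) := by
  induction k generalizing β c with
  | zero => simp
  | succ k ih =>
      rw [pow_succ, Module.End.mul_apply, Derivation.coeFn_coe, pderiv_monomial,
        ih]
      rw [Finsupp.tsub_apply, Finsupp.single_eq_same]
      rw [tsub_tsub, ← Finsupp.single_add, show 1 + k = k + 1 by omega]
      congr 1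
      rw [descF_succ' (β i) k]
      push_cast
      ring

lemma sum_single_apply_of_not_mem {m : ℕ} (α : Fin m →₀ ℕ) (L : List (Fin m)) (i : Fin m)
    (hi : i ∉ L) : ((L.map fun j => Finsupp.single j (α j)).sum) i = 0 := by
  induction L with
  | nil => simp
  | cons j L ih =>
      simp only [List.map_cons, List.sum_cons, Finsupp.add_apply]
      rw [Finsupp.single_eq_of_ne' (by simp at hi; exact fun h => hi.1 h.symm),
        ih (by simp at hi; exact hi.2)]

lemma listProd_monomial {m : ℕ} (α : Fin m →₀ ℕ) (L : List (Fin m)) (hL : L.Nodup)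
    (β : Fin m →₀ ℕ) (c : ℂ) :
    ((L.map fun i => ((pderiv (R := ℂ) i).toLinearMap) ^ (α i)).prod) (monomial β c) =
      monomial (β - (L.map fun i => Finsupp.single i (α i)).sum)
        (c * (L.map fun i => ((β i).descFactorial (α i) : ℂ)).prod) := by
  induction L with
  | nil => simp
  | cons i L ih =>
      simp only [List.map_cons, List.prod_cons, List.sum_cons, Module.End.mul_apply]
      rw [ih (List.nodup_cons.mp hL).2, pderiv_pow_monomial]
      rw [Finsupp.tsub_apply, sum_single_apply_of_not_mem α L i (List.nodup_cons.mp hL).1,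
        Nat.sub_zero]
      rw [tsub_tsub, add_comm]
      ring_nf

lemma diffOpMonomial_monomial {m : ℕ} (α β : Fin m →₀ ℕ) (c : ℂ) :
    diffOpMonomial α (monomial β c) =
      monomial (β - α) (c * ∏ i, ((β i).descFactorial (α i) : ℂ)) := by
  have hsum : (∑ i : Fin m, Finsupp.single i (α i)) = α := by
    ext j
    rw [Finsupp.finset_sum_apply, Finset.sum_eq_single j
      (fun i _ hij => Finsupp.single_eq_of_ne' hij) (by simp), Finsupp.single_eq_same]
  rw [diffOpMonomial, listProd_monomial α _ (List.nodup_finRange m),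
    ← Fin.sum_univ_def, ← Fin.prod_univ_def, hsum]

lemma diffAct_monomial {m : ℕ} (α : Fin m →₀ ℕ) (c : ℂ) :
    diffAct (monomial α c) = c • diffOpMonomial α := by
  have h1 : (monomial α c : MvPolynomial (Fin m) ℂ) = c • monomial α 1 := by
    rw [smul_monomial, smul_eq_mul, mul_one]
  rw [h1, map_smul]
  congr 1
  have h2 : (monomial α 1 : MvPolynomial (Fin m) ℂ) = basisMonomials (Fin m) ℂ α := by
    rw [coe_basisMonomials]
  rw [diffAct, h2, Module.Basis.constr_basis]

lemma diffOpMonomial_add {m : ℕ} (α β : Fin m →₀ ℕ) :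
    diffOpMonomial (α + β) = diffOpMonomial α * diffOpMonomial β := by
  apply (basisMonomials (Fin m) ℂ).ext
  intro γ
  rw [coe_basisMonomials]
  rw [Module.End.mul_apply, diffOpMonomial_monomial, diffOpMonomial_monomial,
    diffOpMonomial_monomial]
  rw [tsub_tsub, add_comm β α]
  congr 1
  rw [one_mul, one_mul, ← Finset.prod_mul_distrib]
  apply Finset.prod_congr rfl
  intro i _
  rw [Finsupp.tsub_apply, Finsupp.add_apply]
  rw [← Nat.cast_mul, descF_add (α i) (β i) (γ i), mul_comm]

lemma diffAct_mul {m : ℕ} (P Q : MvPolynomial (Fin m) ℂ) :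
    diffAct (P * Q) = diffAct P * diffAct Q := by
  induction P using MvPolynomial.induction_on' with
  | add p1 p2 ih1 ih2 => rw [add_mul, map_add, map_add, ih1, ih2, add_mul]
  | monomial α a =>
    induction Q using MvPolynomial.induction_on' with
    | add q1 q2 ih1 ih2 => rw [mul_add, map_add, map_add, ih1, ih2, mul_add]
    | monomial β b =>
      rw [monomial_mul, diffAct_monomial, diffAct_monomial, diffAct_monomial,
        diffOpMonomial_add, smul_mul_smul_comm]

lemma degree_univ {m : ℕ} (f : Fin m →₀ ℕ) : Finsupp.degree f = ∑ i, f i := by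
  rw [Finsupp.degree]
  exact Finset.sum_subset (Finset.subset_univ _)
    (fun i _ hi => Finsupp.notMem_support_iff.mp hi)

lemma exists_lt_of_ne {m : ℕ} (α β : Fin m →₀ ℕ) (hd : Finsupp.degree β = Finsupp.degree α)
    (hne : β ≠ α) : ∃ i, β i < α i := by
  by_contra h
  push_neg at h
  apply hne
  ext i
  rw [degree_univ, degree_univ] at hd
  exact ((Finset.sum_eq_sum_iff_of_le (fun i _ => h i)).mp hd.symm i (Finset.mem_univ i)).symm

lemma diffOpMonomial_pairing {m : ℕ} {G : MvPolynomial (Fin m) ℂ} {d : ℕ}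
    (hG : G.IsHomogeneous d) (α : Fin m →₀ ℕ) (hα : Finsupp.degree α = d) :
    diffOpMonomial α G = C (coeff α G * ∏ i, ((α i).factorial : ℂ)) := by
  conv_lhs => rw [G.as_sum]
  rw [map_sum]
  have key : ∀ β, diffOpMonomial α (monomial β (coeff β G)) =
      monomial (β - α) (coeff β G * ∏ i, ((β i).descFactorial (α i) : ℂ)) :=
    fun β => diffOpMonomial_monomial α β _
  rw [Finset.sum_eq_single α (fun β hβ hne => ?_) (fun hα' => ?_)]
  · rw [key, tsub_self]
    have : ∀ i : Fin m, ((α i).descFactorial (α i) : ℂ) = ((α i).factorial : ℂ) := by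
      intro i; rw [Nat.descFactorial_self]
    simp only [this]
    rfl
  · have hdβ : Finsupp.degree β = d := by
      rw [Finsupp.degree_eq_weight_one]
      exact hG (mem_support_iff.mp hβ)
    obtain ⟨i, hi⟩ := exists_lt_of_ne α β (by rw [hdβ, hα]) hne
    rw [key, Finset.prod_eq_zero (Finset.mem_univ i)
      (by rw [Nat.cast_eq_zero, Nat.descFactorial_eq_zero_iff_lt]; exact hi), mul_zero, map_zero]
  · rw [key, notMem_support_iff.mp hα', zero_mul, map_zero]

lemma pderiv_linear {m : ℕ} (a : Fin m → ℂ) (i : Fin m) :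
    pderiv (R := ℂ) i (∑ k, C (a k) * X k) = C (a i) := by
  rw [map_sum]
  have h : ∀ k, pderiv (R := ℂ) i (C (a k) * X k) = if k = i then C (a i) else 0 := by
    intro k
    by_cases hk : k = i
    · subst hk; simp
    · rw [if_neg hk]; simp [pderiv_X_of_ne hk]
  simp only [h]
  simp

lemma pderiv_pow_linpow {m : ℕ} (a : Fin m → ℂ) (i : Fin m) (k p : ℕ) :
    (((pderiv (R := ℂ) i).toLinearMap) ^ k) ((∑ j, C (a j) * X j) ^ p) =
      ((p.descFactorial k : ℂ) * a i ^ k) • (∑ j, C (a j) * X j) ^ (p - k) := by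
  induction k generalizing p with
  | zero => simp
  | succ k ih =>
      set l : MvPolynomial (Fin m) ℂ := ∑ j, C (a j) * X j with hl
      rw [pow_succ, Module.End.mul_apply, Derivation.coeFn_coe]
      have h1 : pderiv (R := ℂ) i (l ^ p) = (↑p * a i) • l ^ (p - 1) := by
        rw [Derivation.leibniz_pow, pderiv_linear]
        rw [show l ^ (p - 1) • C (a i) = a i • l ^ (p - 1) from by
            rw [smul_eq_mul, mul_comm, ← smul_eq_C_mul],
          ← Nat.cast_smul_eq_nsmul ℂ, smul_smul]
      rw [h1, map_smul, ih (p - 1), smul_smul]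
      have h2 : p - 1 - k = p - (k + 1) := by omega
      rw [h2]
      congr 1
      rw [descF_succ' p k]
      push_cast
      ring

lemma listProd_linpow {m : ℕ} (a : Fin m → ℂ) (α : Fin m →₀ ℕ) (L : List (Fin m)) (p : ℕ) :
    ((L.map fun i => ((pderiv (R := ℂ) i).toLinearMap) ^ (α i)).prod)
        ((∑ j, C (a j) * X j) ^ p) =
      ((p.descFactorial ((L.map α).sum) : ℂ) * (L.map fun i => a i ^ α i).prod) •
        (∑ j, C (a j) * X j) ^ (p - (L.map α).sum) := by
  induction L with
  | nil => simp
  | cons i L ih =>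
      simp only [List.map_cons, List.prod_cons, List.sum_cons, Module.End.mul_apply]
      rw [ih, map_smul, pderiv_pow_linpow, smul_smul]
      have h2 : p - (L.map α).sum - α i = p - (α i + (L.map α).sum) := by omega
      rw [h2]
      congr 1
      rw [descF_add (α i) ((L.map α).sum) p]
      push_cast
      ring

lemma diffOpMonomial_linpow {m : ℕ} (a : Fin m → ℂ) (α : Fin m →₀ ℕ) (p : ℕ) :
    diffOpMonomial α ((∑ j, C (a j) * X j) ^ p) =
      ((p.descFactorial (Finsupp.degree α) : ℂ) * ∏ i, a i ^ α i) •
        (∑ j, C (a j) * X j) ^ (p - Finsupp.degree α) := by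
  rw [diffOpMonomial, listProd_linpow, degree_univ, ← Fin.sum_univ_def, ← Fin.prod_univ_def]

lemma diffAct_linpow {m : ℕ} (a : Fin m → ℂ) {D : MvPolynomial (Fin m) ℂ} {e : ℕ}
    (hD : D.IsHomogeneous e) (p : ℕ) :
    diffAct D ((∑ j, C (a j) * X j) ^ p) =
      ((p.descFactorial e : ℂ) * eval a D) • (∑ j, C (a j) * X j) ^ (p - e) := by
  conv_lhs => rw [D.as_sum]
  rw [map_sum, LinearMap.sum_apply]
  have key : ∀ α ∈ D.support,
      (diffAct (monomial α (coeff α D))) ((∑ j, C (a j) * X j) ^ p) =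
      ((p.descFactorial e : ℂ) * (coeff α D * ∏ i, a i ^ α i)) •
        (∑ j, C (a j) * X j) ^ (p - e) := by
    intro α hα
    have hdeg : Finsupp.degree α = e := by
      rw [Finsupp.degree_eq_weight_one]
      exact hD (mem_support_iff.mp hα)
    rw [diffAct_monomial, LinearMap.smul_apply, diffOpMonomial_linpow, hdeg, smul_smul]
    congr 1
    ring
  rw [Finset.sum_congr rfl key, ← Finset.sum_smul, ← Finset.mul_sum, eval_eq']

lemma factor_through {V : Type*} [AddCommGroup V] [Module ℂ V] {r : ℕ}
    (f : V →ₗ[ℂ] (Fin r → ℂ)) (g : V →ₗ[ℂ] ℂ) (h : LinearMap.ker f ≤ LinearMap.ker g) :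
    ∃ c : (Fin r → ℂ) →ₗ[ℂ] ℂ, ∀ x, g x = c (f x) := by
  let gbar : (V ⧸ LinearMap.ker f) →ₗ[ℂ] ℂ := (LinearMap.ker f).liftQ g h
  let e : (V ⧸ LinearMap.ker f) ≃ₗ[ℂ] LinearMap.range f := f.quotKerEquivRange
  obtain ⟨c, hc⟩ := LinearMap.exists_extend (gbar ∘ₗ (e.symm : LinearMap.range f →ₗ[ℂ] V ⧸ LinearMap.ker f))
  refine ⟨c, fun x => ?_⟩
  have h1 : f x = (LinearMap.range f).subtype ⟨f x, LinearMap.mem_range_self f x⟩ := rfl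
  rw [h1, ← LinearMap.comp_apply, hc, LinearMap.comp_apply]
  have h2 : (⟨f x, LinearMap.mem_range_self f x⟩ : LinearMap.range f) =
      e (Submodule.Quotient.mk x) := by
    apply Subtype.ext
    exact (f.quotKerEquivRange_apply_mk x).symm
  rw [h2]
  simp only [e, LinearEquiv.coe_coe, LinearEquiv.symm_apply_apply]
  exact (Submodule.liftQ_apply _ g x).symm

/-- apolarity lemma. For `F` homogeneous of degree `d` and pairwise
non-proportional nonzero linear forms `l_i` with coefficient vectors `a i`, `F` is a
linear combination of `l₁^d, …, l_r^d` iff the homogeneous vanishing ideal `I_Γ` of the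
points `a i` is contained in `F^⊥`. -/
theorem statement7 {n d r : ℕ} (F : MvPolynomial (Fin (n + 1)) ℂ)
    (hF : F.IsHomogeneous d)
    (a : Fin r → Fin (n + 1) → ℂ) (ha : ∀ i, a i ≠ 0)
    (hprop : ∀ i j, i ≠ j → ∀ c : ℂ, a i ≠ c • a j) :
    (∃ c : Fin r → ℂ,
        F = ∑ i, c i • (∑ k : Fin (n + 1), MvPolynomial.C (a i k) * X k) ^ d) ↔
    ∀ D ∈ Ideal.span {D : MvPolynomial (Fin (n + 1)) ℂ |
        (∃ e : ℕ, D.IsHomogeneous e) ∧ ∀ i, eval (a i) D = 0},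
      diffAct D F = 0 := by
  constructor
  · rintro ⟨c, rfl⟩ D hD
    induction hD using Submodule.span_induction with
    | mem s hs =>
        obtain ⟨⟨e, he⟩, hvan⟩ := hs
        rw [map_sum]
        refine Finset.sum_eq_zero fun i _ => ?_
        rw [map_smul, diffAct_linpow (a i) he d, hvan i, mul_zero, zero_smul, smul_zero]
    | zero => rw [map_zero, LinearMap.zero_apply]
    | add x y hx hy ihx ihy => rw [map_add, LinearMap.add_apply, ihx, ihy, add_zero]
    | smul q x hx ih =>
        rw [smul_eq_mul, diffAct_mul, Module.End.mul_apply, ih, map_zero]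
  · intro H
    -- the evaluation map and the pairing functional
    let Ev : MvPolynomial (Fin (n + 1)) ℂ →ₗ[ℂ] (Fin r → ℂ) :=
      { toFun := fun D i => eval (a i) D
        map_add' := fun D E => by funext i; simp
        map_smul' := fun c D => by funext i; simp [smul_eq_C_mul] }
    let Ψ : MvPolynomial (Fin (n + 1)) ℂ →ₗ[ℂ] ℂ :=
      { toFun := fun D => coeff 0 (diffAct D F)
        map_add' := fun D E => by simp [coeff_add]
        map_smul' := fun c D => by simp }
    set W := homogeneousSubmodule (Fin (n + 1)) ℂ d with hW
    have hker : LinearMap.ker (Ev ∘ₗ W.subtype) ≤ LinearMap.ker (Ψ ∘ₗ W.subtype) := by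
      rintro ⟨D, hD⟩ hker0
      have hvan : ∀ i, eval (a i) D = 0 := fun i => congrFun (by exact hker0) i
      have hDhom : D.IsHomogeneous d := hD
      have hmem : D ∈ Ideal.span {D : MvPolynomial (Fin (n + 1)) ℂ |
          (∃ e : ℕ, D.IsHomogeneous e) ∧ ∀ i, eval (a i) D = 0} :=
        Ideal.subset_span ⟨⟨d, hDhom⟩, hvan⟩
      have hzero : diffAct D F = 0 := H D hmem
      simp only [LinearMap.mem_ker, LinearMap.comp_apply, Submodule.coe_subtype]
      show coeff 0 (diffAct D F) = 0
      rw [hzero, coeff_zero]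
    obtain ⟨cL, hcL⟩ := factor_through (Ev ∘ₗ W.subtype) (Ψ ∘ₗ W.subtype) hker
    set cv : Fin r → ℂ := fun i => cL fun j => if i = j then 1 else 0 with hcv
    have hfact : ((d.descFactorial d : ℂ)) ≠ 0 := by
      rw [Nat.descFactorial_self]
      exact_mod_cast Nat.factorial_ne_zero d
    set cc : Fin r → ℂ := fun i => cv i / (d.descFactorial d : ℂ) with hcc
    set F' : MvPolynomial (Fin (n + 1)) ℂ :=
      ∑ i, cc i • (∑ k : Fin (n + 1), MvPolynomial.C (a i k) * X k) ^ d with hF'def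
    have hlin : ∀ i : Fin r,
        (∑ k : Fin (n + 1), MvPolynomial.C (a i k) * X k).IsHomogeneous 1 := by
      intro i
      apply MvPolynomial.IsHomogeneous.sum
      intro k _
      exact isHomogeneous_C_mul_X (a i k) k
    have hF' : F'.IsHomogeneous d := by
      rw [hF'def]
      apply MvPolynomial.IsHomogeneous.sum
      intro i _
      have h5 := ((hlin i).pow d).C_mul (cc i)
      simpa [smul_eq_C_mul] using h5
    -- key : matching of coefficients in degree d
    have key : ∀ α : Fin (n + 1) →₀ ℕ, Finsupp.degree α = d → coeff α F = coeff α F' := by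
      intro α hα
      set Dα : MvPolynomial (Fin (n + 1)) ℂ := monomial α 1 with hDα
      have hDαhom : Dα.IsHomogeneous d := isHomogeneous_monomial 1 hα
      have hDαW : Dα ∈ W := hDαhom
      have h1 : coeff 0 (diffAct Dα F) = ∑ i, eval (a i) Dα * cv i := by
        have h0 := hcL ⟨Dα, hDαW⟩
        simp only [LinearMap.comp_apply, Submodule.coe_subtype] at h0
        have h0' : coeff 0 (diffAct Dα F) = cL (Ev Dα) := h0
        rw [h0', LinearMap.pi_apply_eq_sum_univ cL (Ev Dα)]
        refine Finset.sum_congr rfl fun i _ => ?_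
        rw [smul_eq_mul]
        rfl
      have h2 : coeff 0 (diffAct Dα F') = ∑ i, eval (a i) Dα * cv i := by
        have e1 : diffAct Dα F' = ∑ i, (cc i * ((d.descFactorial d : ℂ) * eval (a i) Dα)) •
            (1 : MvPolynomial (Fin (n + 1)) ℂ) := by
          rw [hF'def, map_sum]
          refine Finset.sum_congr rfl fun i _ => ?_
          rw [map_smul, diffAct_linpow (a i) hDαhom d, Nat.sub_self, pow_zero, smul_smul]
        rw [e1, coeff_sum]
        simp only [coeff_smul, smul_eq_mul, coeff_zero_one, mul_one]
        refine Finset.sum_congr rfl fun i _ => ?_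
        rw [hcc]
        field_simp
      have h3 : diffAct Dα F = C (coeff α F * ∏ i, ((α i).factorial : ℂ)) := by
        rw [hDα, diffAct_monomial, one_smul, diffOpMonomial_pairing hF α hα]
      have h3' : diffAct Dα F' = C (coeff α F' * ∏ i, ((α i).factorial : ℂ)) := by
        rw [hDα, diffAct_monomial, one_smul, diffOpMonomial_pairing hF' α hα]
      have h4 : coeff α F * (∏ i, ((α i).factorial : ℂ)) =
          coeff α F' * (∏ i, ((α i).factorial : ℂ)) := by
        have h5 := h1.trans h2.symm
        rw [h3, h3', coeff_zero_C, coeff_zero_C] at h5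
        exact h5
      have hprodne : (∏ i, ((α i).factorial : ℂ)) ≠ 0 :=
        Finset.prod_ne_zero_iff.mpr fun i _ =>
          Nat.cast_ne_zero.mpr (Nat.factorial_ne_zero _)
      exact mul_right_cancel₀ hprodne h4
    refine ⟨cc, ?_⟩
    rw [← hF'def]
    apply MvPolynomial.ext
    intro β
    by_cases hβ : Finsupp.degree β = d
    · exact key β hβ
    · rw [hF.coeff_eq_zero hβ, hF'.coeff_eq_zero hβ]
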